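/- Every closed subspace of a Δ-space is a Δ-space. -/

import Mathlib

def IsDeltaSpace (X : Type*) [TopologicalSpace X] : Prop :=
  ∀ D : ℕ → Set X, (∀ n, D (n + 1) ⊆ D n) → (⋂ n, D n) = ∅ →
    ∃ V : ℕ → Set X, (∀ n, IsOpen (V n)) ∧ (∀ n, V (n + 1) ⊆ V n) ∧
      (⋂ n, V n) = ∅ ∧ ∀ n, D n ⊆ V n

theorem isDeltaSpace_closed_subspace {X : Type*} [TopologicalSpace X] (hX : IsDeltaSpace X)
    (F : Set X) (hF : IsClosed F) : IsDeltaSpace F := by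
  intro D hD hDempty
  obtain ⟨V, hVopen, hVdec, hVempty, hDV⟩ := hX (fun n => Subtype.val '' D n)
    (fun n => Set.image_mono (f := Subtype.val) (hD n))
    (by
      ext x
      simp only [Set.mem_iInter, Set.mem_image, Set.mem_empty_iff_false, iff_false, not_forall]
      by_contra h
      push_neg at h
      obtain ⟨y, hy0, hxy⟩ := h 0
      have : y ∈ ⋂ n, D n := by
        refine Set.mem_iInter.2 fun n => ?_
        obtain ⟨z, hz, hxz⟩ := h n
        have : z = y := Subtype.ext (hxz.trans hxy.symm)
        rwa [this] at hz
      rw [hDempty] at this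
      exact this)
  refine ⟨fun n => Subtype.val ⁻¹' V n, fun n => (hVopen n).preimage continuous_subtype_val,
    fun n => Set.preimage_mono (hVdec n), ?_, fun n y hy => hDV n ⟨y, hy, rfl⟩⟩
  ext y
  simp only [Set.mem_iInter, Set.mem_preimage, Set.mem_empty_iff_false, iff_false, not_forall]
  have : (y : X) ∉ ⋂ n, V n := by rw [hVempty]; exact Set.notMem_empty _
  simpa [Set.mem_iInter, not_forall] using this
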